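/- Invariant of the ESL iteration: let G be a game with integer weights, and define G₀ = G, φ_j = En⁺_{G_j}, G_{j+1} = (G_j)_{φ_j}, and Φ_j = φ₀ + ⋯ + φ_{j−1}. Then for every j ≥ 0, the potential Φ_j is sound for G (Φ_j ≤ En_G pointwise) and En_G(v) = Φ_j(v) + En_{G_j}(v) for all v ∈ V. -/

import Mathlib

attribute [local instance] Classical.propDecidable

/-- A game: a directed graph `E` on vertex set `V` with no sink, edge weights `wt : V → V → R`,
and a partition of the vertices into those belonging to Min (`isMin`) and to Max (the rest). -/
structure Game (V : Type) (R : Type) where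
  E : V → V → Prop
  wt : V → V → R
  isMin : V → Prop
  nosink : ∀ v, ∃ u, E v u

namespace Game

variable {V : Type} {R : Type}

/-- A strategy for Min: a choice of an outgoing edge at every Min vertex. -/
def MinStrat (G : Game V R) : Type := {σ : V → V // ∀ v, G.isMin v → G.E v (σ v)}

/-- A strategy for Max: a choice of an outgoing edge at every Max vertex. -/
def MaxStrat (G : Game V R) : Type := {τ : V → V // ∀ v, ¬ G.isMin v → G.E v (τ v)}

/-- An infinite path in the graph. -/
def IsPath (G : Game V R) (π : ℕ → V) : Prop := ∀ i, G.E (π i) (π (i + 1))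

/-- Consistency of an infinite path with a Min strategy. -/
def ConsMin (G : Game V R) (σ : G.MinStrat) (π : ℕ → V) : Prop :=
  ∀ i, G.isMin (π i) → π (i + 1) = σ.1 (π i)

/-- Consistency of an infinite path with a Max strategy. -/
def ConsMax (G : Game V R) (τ : G.MaxStrat) (π : ℕ → V) : Prop :=
  ∀ i, ¬ G.isMin (π i) → π (i + 1) = τ.1 (π i)

/-- Infinite paths starting in `v` consistent with the Min strategy `σ`. -/
def PlaysMin (G : Game V R) (σ : G.MinStrat) (v : V) : Type :=
  {π : ℕ → V // π 0 = v ∧ G.IsPath π ∧ G.ConsMin σ π}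

/-- Infinite paths starting in `v` consistent with the Max strategy `τ`. -/
def PlaysMax (G : Game V R) (τ : G.MaxStrat) (v : V) : Type :=
  {π : ℕ → V // π 0 = v ∧ G.IsPath π ∧ G.ConsMax τ π}

/-- The sequence of weights along an infinite path. -/
def wseq (G : Game V R) (π : ℕ → V) : ℕ → R := fun i => G.wt (π i) (π (i + 1))

/-- Embedding of `ℤ ∪ {∞}` into the extended reals. -/
noncomputable def toE (x : WithTop ℤ) : EReal :=
  if h : x = ⊤ then ⊤ else (((x.untop h : ℤ) : ℝ) : EReal)

/-- Embedding of `ℕ ∪ {∞}` into the extended reals. -/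
noncomputable def enatToE (x : ENat) : EReal :=
  if x = ⊤ then ⊤ else ((x.toNat : ℝ) : EReal)

/-- Conversion `ℤ ∪ {∞} → ℕ ∪ {∞}` (exact on non-negative values). -/
noncomputable def wToN (x : WithTop ℤ) : ENat :=
  if h : x = ⊤ then ⊤ else ((x.untop h).toNat : ENat)

/-- The mean-payoff valuation `MP(w₀w₁⋯) = limsup_k (1/k) ∑_{i<k} w_i`. -/
noncomputable def MPv (w : ℕ → ℤ) : EReal :=
  Filter.limsup
    (fun k : ℕ => ((((∑ i ∈ Finset.range k, w i : ℤ) : ℝ) / (k : ℝ) : ℝ) : EReal))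
    Filter.atTop

/-- The energy valuation `En(w₀w₁⋯) = sup_k ∑_{i<k} w_i` (weights given in `EReal`). -/
noncomputable def En (w : ℕ → EReal) : EReal :=
  ⨆ k : ℕ, ∑ i ∈ Finset.range k, w i

/-- The positive-energy valuation `En⁺(w₀w₁⋯) = ∑_{i<k¬} w_i ∈ ℕ ∪ {∞}` where `k¬` is the
first index of a negative weight (the whole, possibly infinite, sum if no weight is negative). -/
noncomputable def EnP (w : ℕ → WithTop ℤ) : ENat :=
  if h : ∃ k, w k < 0 then ∑ i ∈ Finset.range (Nat.find h), wToN (w i)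
  else ⨆ k : ℕ, ∑ i ∈ Finset.range k, wToN (w i)

/-- The mean-payoff value of a vertex:
`MP_G(v) = inf over Min strategies σ of sup over plays π from v consistent with σ of MP(w(π))`. -/
noncomputable def MPVal (G : Game V ℤ) (v : V) : EReal :=
  ⨅ σ : G.MinStrat, ⨆ π : G.PlaysMin σ v, MPv (G.wseq π.1)

/-- The energy value of a vertex. -/
noncomputable def EnVal (G : Game V (WithTop ℤ)) (v : V) : EReal :=
  ⨅ σ : G.MinStrat, ⨆ π : G.PlaysMin σ v, En (fun i => toE (G.wseq π.1 i))

/-- The positive-energy value of a vertex. -/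
noncomputable def EnPVal (G : Game V (WithTop ℤ)) (v : V) : ENat :=
  ⨅ σ : G.MinStrat, ⨆ π : G.PlaysMin σ v, EnP (G.wseq π.1)

/-- Lift a game with integer weights to a game with weights in `ℤ ∪ {∞}`. -/
def liftZ (G : Game V ℤ) : Game V (WithTop ℤ) :=
  { E := G.E, wt := fun u v => (G.wt u v : WithTop ℤ), isMin := G.isMin, nosink := G.nosink }

/-- The `φ`-modified weight: `w_φ(v,v') = w(v,v') + φ(v') − φ(v)` when `w(v,v')`, `φ(v)`, `φ(v')`
are all finite, and `∞` otherwise. -/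
noncomputable def modWt (w : V → V → WithTop ℤ) (φ : V → ENat) (u v : V) : WithTop ℤ :=
  if w u v = ⊤ ∨ φ u = ⊤ ∨ φ v = ⊤ then ⊤
  else (((w u v).untopD 0 + ((φ v).toNat : ℤ) - ((φ u).toNat : ℤ) : ℤ) : WithTop ℤ)

/-- The `φ`-modified game `G_φ`. -/
noncomputable def modify (G : Game V (WithTop ℤ)) (φ : V → ENat) : Game V (WithTop ℤ) :=
  { G with wt := modWt G.wt φ }

/-- `π 0 → π 1 → ⋯ → π k` is a simple cycle: `k ≥ 1`, consecutive edges, `π k = π 0`,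
and `π 0, …, π (k-1)` pairwise distinct. -/
def IsSimpleCycle (G : Game V R) (π : ℕ → V) (k : ℕ) : Prop :=
  1 ≤ k ∧ (∀ i < k, G.E (π i) (π (i + 1))) ∧ π k = π 0 ∧
    ∀ i < k, ∀ j < k, π i = π j → i = j

/-- A game is simple if every simple cycle has nonzero sum of weights. -/
def IsSimpleR [AddCommMonoid R] (G : Game V R) : Prop :=
  ∀ π k, IsSimpleCycle G π k → (∑ i ∈ Finset.range k, G.wt (π i) (π (i + 1))) ≠ 0

/-- `W = max_{e ∈ E} |w(e)|`. -/
noncomputable def maxW (G : Game V ℤ) [Fintype V] : ℕ :=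
  Finset.sup Finset.univ (fun p : V × V => if G.E p.1 p.2 then (G.wt p.1 p.2).natAbs else 0)

/-- The ESL iteration: `G₀ = G` and `G_{j+1} = (G_j)_{φ_j}` where `φ_j = En⁺_{G_j}`. -/
noncomputable def esl (G : Game V (WithTop ℤ)) : ℕ → Game V (WithTop ℤ)
  | 0 => G
  | j + 1 => modify (esl G j) (EnPVal (esl G j))

/-- The accumulated ESL potential `Φ_j = φ₀ + ⋯ + φ_{j−1}`. -/
noncomputable def eslPhi (G : Game V (WithTop ℤ)) (j : ℕ) (v : V) : ENat :=
  ∑ i ∈ Finset.range j, EnPVal (esl G i) v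

/-- The set of vertices from which Min can ensure to immediately visit a negative-weight edge:
Min vertices with some negative outgoing edge, and Max vertices all of whose outgoing edges
are negative. -/
def NegSet (G : Game V (WithTop ℤ)) : Set V :=
  {v | (G.isMin v ∧ ∃ u, G.E v u ∧ G.wt v u < 0) ∨
       (¬ G.isMin v ∧ ∀ u, G.E v u → G.wt v u < 0)}

end Game

open Game

namespace EslAux

open Finset Game

/-! ### EReal helpers -/

lemma ereal_gc (c : ℝ) : GaloisConnection (fun x : EReal => (c : EReal) + x)
    (fun y : EReal => ((-c : ℝ) : EReal) + y) := by
  intro x y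
  dsimp only
  induction x using EReal.rec with
  | bot => simp
  | top =>
    induction y using EReal.rec with
    | bot => simp [EReal.top_add_coe, EReal.coe_add_top]
    | coe s => simp [EReal.coe_add_top, ← EReal.coe_neg, ← EReal.coe_add]
    | top => simp
  | coe r =>
    induction y using EReal.rec with
    | bot => simp [← EReal.coe_add]
    | coe s =>
      rw [← EReal.coe_add, ← EReal.coe_add, EReal.coe_le_coe_iff, EReal.coe_le_coe_iff]
      constructor <;> intro <;> linarith
    | top => simp [← EReal.coe_add]

lemma coe_add_iSup {ι : Sort*} (c : ℝ) (f : ι → EReal) :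
    (c : EReal) + ⨆ i, f i = ⨆ i, ((c : EReal) + f i) := (ereal_gc c).l_iSup

lemma coe_add_iInf {ι : Sort*} (c : ℝ) (f : ι → EReal) :
    (c : EReal) + ⨅ i, f i = ⨅ i, ((c : EReal) + f i) := by
  have := (ereal_gc (-c)).u_iInf (f := f)
  simpa using this

lemma add_iSup_le {ι : Sort*} [Nonempty ι] {c T : EReal} {f : ι → EReal}
    (hf : ∀ i, f i ≠ ⊥) (h : ∀ i, c + f i ≤ T) : c + ⨆ i, f i ≤ T := by
  induction c using EReal.rec with
  | bot => simp
  | coe r => rw [coe_add_iSup]; exact iSup_le h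
  | top =>
    obtain ⟨i⟩ := ‹Nonempty ι›
    have h1 : (⊤ : EReal) + f i = ⊤ := EReal.top_add_of_ne_bot (hf i)
    have h2 : (⨆ i, f i) ≠ ⊥ := by
      intro hb
      exact hf i (le_bot_iff.mp (hb ▸ le_iSup f i))
    rw [EReal.top_add_of_ne_bot h2]
    exact (h1 ▸ h i)

lemma le_add_iInf {ι : Sort*} [Nonempty ι] {c T : EReal} {f : ι → EReal}
    (hf : ∀ i, 0 ≤ f i) (h : ∀ i, T ≤ c + f i) : T ≤ c + ⨅ i, f i := by
  induction c using EReal.rec with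
  | bot => obtain ⟨i⟩ := ‹Nonempty ι›; simpa using h i
  | coe r => rw [coe_add_iInf]; exact le_iInf h
  | top =>
    have h2 : (⨅ i, f i) ≠ ⊥ := by
      have h0 : (0 : EReal) ≤ ⨅ i, f i := le_iInf hf
      intro hb; rw [hb] at h0; simp at h0
    rw [EReal.top_add_of_ne_bot h2]; exact le_top

lemma sum_ne_bot {α : Type*} {s : Finset α} {f : α → EReal} (h : ∀ i ∈ s, f i ≠ ⊥) :
    ∑ i ∈ s, f i ≠ ⊥ := by
  classical
  induction s using Finset.induction with
  | empty => simp
  | @insert a s' hx ih =>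
    rw [Finset.sum_insert hx, Ne, EReal.add_eq_bot_iff]
    push_neg
    exact ⟨h a (mem_insert_self a s'), ih fun i hi => h i (mem_insert_of_mem hi)⟩

lemma sum_eq_top {α : Type*} {s : Finset α} {f : α → EReal} (h : ∀ i ∈ s, f i ≠ ⊥)
    {i₀ : α} (hi : i₀ ∈ s) (ht : f i₀ = ⊤) : ∑ i ∈ s, f i = ⊤ := by
  classical
  rw [← Finset.add_sum_erase _ _ hi, ht]
  exact EReal.top_add_of_ne_bot (sum_ne_bot fun i hi' => h i (Finset.mem_of_mem_erase hi'))

lemma nat_le_top {x : EReal} (h : ∀ n : ℕ, (n : EReal) ≤ x) : x = ⊤ := by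
  induction x using EReal.rec with
  | bot => simpa using h 0
  | coe r =>
    exfalso
    have h1 := h (⌈r⌉₊ + 1)
    rw [show ((((⌈r⌉₊:ℕ) + 1 : ℕ)) : EReal) = (((⌈r⌉₊ + 1 : ℕ) : ℝ) : EReal) by norm_cast] at h1
    rw [EReal.coe_le_coe_iff] at h1
    have h2 : r ≤ (⌈r⌉₊ : ℝ) := Nat.le_ceil r
    push_cast at h1
    linarith
  | top => rfl

/-- The additive hom `ℤ →+ EReal`. -/
noncomputable def intToE : ℤ →+ EReal where
  toFun z := ((z : ℝ) : EReal)
  map_zero' := by simp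
  map_add' x y := by push_cast; exact EReal.coe_add _ _

lemma intToE_apply (z : ℤ) : intToE z = ((z : ℝ) : EReal) := rfl

/-! ### toE / enatToE / wToN helpers -/

lemma toE_top : toE (⊤ : WithTop ℤ) = ⊤ := by simp [toE]

lemma toE_coe (z : ℤ) : toE ((z : ℤ) : WithTop ℤ) = ((z : ℝ) : EReal) := by
  rw [toE, dif_neg (WithTop.coe_ne_top)]
  simp

lemma toE_ne_bot (x : WithTop ℤ) : toE x ≠ ⊥ := by
  rw [toE]
  split
  · simp
  · simp

lemma enatToE_top : enatToE ⊤ = ⊤ := by simp [enatToE]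

lemma enatToE_coe (n : ℕ) : enatToE (n : ENat) = ((n : ℝ) : EReal) := by
  rw [enatToE, if_neg (by exact_mod_cast WithTop.coe_ne_top)]
  simp

lemma enatToE_zero : enatToE 0 = 0 := by
  have := enatToE_coe 0
  simpa using this

lemma enatToE_nonneg (x : ENat) : 0 ≤ enatToE x := by
  rw [enatToE]
  split
  · exact le_top
  · exact EReal.coe_nonneg.mpr (Nat.cast_nonneg _)

lemma enatToE_ne_bot (x : ENat) : enatToE x ≠ ⊥ := by
  intro h
  have := enatToE_nonneg x
  rw [h] at this
  simp at this

lemma enatToE_add (a b : ENat) : enatToE (a + b) = enatToE a + enatToE b := by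
  by_cases ha : a = ⊤
  · rw [ha, top_add, enatToE_top, EReal.top_add_of_ne_bot (enatToE_ne_bot b)]
  by_cases hb : b = ⊤
  · rw [hb, add_top, enatToE_top, EReal.add_top_of_ne_bot (enatToE_ne_bot a)]
  lift a to ℕ using ha with m
  lift b to ℕ using hb with n
  rw [← Nat.cast_add, enatToE_coe, enatToE_coe, enatToE_coe]
  push_cast
  rfl

lemma enatToE_mono {a b : ENat} (h : a ≤ b) : enatToE a ≤ enatToE b := by
  by_cases hb : b = ⊤
  · rw [hb, enatToE_top]; exact le_top
  have ha : a ≠ ⊤ := fun h' => hb (top_le_iff.mp (h' ▸ h))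
  lift a to ℕ using ha with m
  lift b to ℕ using hb with n
  rw [enatToE_coe, enatToE_coe, EReal.coe_le_coe_iff]
  exact_mod_cast Nat.cast_le.mpr (by exact_mod_cast h)

lemma enatToE_sum {α : Type*} (s : Finset α) (f : α → ENat) :
    enatToE (∑ i ∈ s, f i) = ∑ i ∈ s, enatToE (f i) := by
  classical
  induction s using Finset.induction with
  | empty => simpa using enatToE_zero
  | @insert a s' hx ih => rw [Finset.sum_insert hx, Finset.sum_insert hx, enatToE_add, ih]

lemma enatToE_iSup_le {ι : Sort*} [Nonempty ι] (s : ι → ENat) {T : EReal}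
    (h : ∀ i, enatToE (s i) ≤ T) : enatToE (⨆ i, s i) ≤ T := by
  by_cases htop : (⨆ i, s i) = ⊤
  · rw [htop, enatToE_top]
    by_cases hex : ∃ i, s i = ⊤
    · obtain ⟨i, hi⟩ := hex
      have := h i
      rw [hi, enatToE_top] at this
      exact this
    · push_neg at hex
      have hn : ∀ n : ℕ, (n : EReal) ≤ T := by
        intro n
        have hlt : (n : ENat) < ⨆ i, s i := htop ▸ (by exact_mod_cast WithTop.coe_lt_top n)
        rw [lt_iSup_iff] at hlt
        obtain ⟨i, hi⟩ := hlt
        lift s i to ℕ using hex i with m hm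
        have hmn : n < m := by exact_mod_cast hi
        have h2 := h i
        rw [← hm, enatToE_coe] at h2
        refine le_trans ?_ h2
        have h3 : ((n:ℝ):EReal) ≤ ((m:ℝ):EReal) := EReal.coe_le_coe_iff.mpr (by exact_mod_cast hmn.le)
        rw [← EReal.coe_coe_eq_natCast]
        exact h3
      rw [nat_le_top hn]
  · lift (⨆ i, s i) to ℕ using htop with n hn
    rcases Nat.eq_zero_or_pos n with h0 | hpos
    · obtain ⟨i⟩ := ‹Nonempty ι›
      have hsi : s i ≤ (n : ENat) := hn ▸ le_iSup s i
      rw [h0] at hsi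
      have hz : s i = 0 := le_antisymm (by exact_mod_cast hsi) zero_le
      rw [h0, Nat.cast_zero, ← hz]
      exact h i
    · obtain ⟨m, hm⟩ := Nat.exists_eq_succ_of_ne_zero hpos.ne'
      have hlt : ((m : ℕ) : ENat) < ⨆ i, s i := by
        rw [← hn]
        have : m < n := by omega
        exact_mod_cast this
      rw [lt_iSup_iff] at hlt
      obtain ⟨i, hi⟩ := hlt
      have hsi : s i ≤ ((n : ℕ) : ENat) := hn ▸ le_iSup s i
      have hne : s i ≠ ⊤ := fun h' => by simp [h'] at hsi
      lift s i to ℕ using hne with m' hm'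
      have h1 : m < m' := by exact_mod_cast hi
      have h2 : m' ≤ n := by exact_mod_cast hsi
      have hmn : m' = n := by omega
      rw [← hmn, hm']
      exact h i

lemma wToN_spec {x : WithTop ℤ} (hx : 0 ≤ x) : enatToE (wToN x) = toE x := by
  by_cases h : x = ⊤
  · rw [h]
    rw [wToN, dif_pos rfl, enatToE_top, toE_top]
  · lift x to ℤ using h with z
    rw [wToN, dif_neg (WithTop.coe_ne_top)]
    have hz : 0 ≤ z := by exact_mod_cast hx
    rw [toE_coe]
    simp only [WithTop.untop_coe]
    rw [enatToE_coe]
    congr 1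
    exact_mod_cast congrArg (fun t : ℤ => (t : ℝ)) (Int.toNat_of_nonneg hz)

end EslAux

namespace EslAux

open Finset Game

variable {V : Type} {R : Type}

/-! ### Default plays -/

noncomputable def dstep (H : Game V R) (σ : H.MinStrat) (u : V) : V :=
  if H.isMin u then σ.1 u else (H.nosink u).choose

lemma dstep_edge (H : Game V R) (σ : H.MinStrat) (u : V) : H.E u (dstep H σ u) := by
  rw [dstep]
  split
  · exact σ.2 u ‹_›
  · exact (H.nosink u).choose_spec

noncomputable def dplay (H : Game V R) (σ : H.MinStrat) (v : V) : ℕ → V :=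
  fun n => (dstep H σ)^[n] v

lemma dplay_succ (H : Game V R) (σ : H.MinStrat) (v : V) (n : ℕ) :
    dplay H σ v (n + 1) = dstep H σ (dplay H σ v n) := Function.iterate_succ_apply' _ _ _

instance minStratNonempty (H : Game V R) : Nonempty H.MinStrat :=
  ⟨⟨fun u => (H.nosink u).choose, fun u _ => (H.nosink u).choose_spec⟩⟩

instance playsNonempty (H : Game V R) (σ : H.MinStrat) (v : V) :
    Nonempty (H.PlaysMin σ v) := by
  refine ⟨⟨dplay H σ v, rfl, ?_, ?_⟩⟩
  · intro i
    rw [dplay_succ]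
    exact dstep_edge H σ _
  · intro i hmin
    rw [dplay_succ, dstep, if_pos hmin]

/-! ### Basic facts about `En`, `supE`, `EnVal` -/

lemma partial_le_En (w : ℕ → EReal) (k : ℕ) : ∑ i ∈ range k, w i ≤ En w :=
  le_iSup (fun k => ∑ i ∈ range k, w i) k

lemma En_nonneg (w : ℕ → EReal) : 0 ≤ En w := by
  simpa using partial_le_En w 0

lemma En_ne_bot (w : ℕ → EReal) : En w ≠ ⊥ := by
  intro h
  have := En_nonneg w
  rw [h] at this
  simp at this

noncomputable def supE (H : Game V (WithTop ℤ)) (σ : H.MinStrat) (v : V) : EReal :=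
  ⨆ π : H.PlaysMin σ v, En (fun i => toE (H.wseq π.1 i))

lemma le_supE (H : Game V (WithTop ℤ)) (σ : H.MinStrat) (v : V) (π : H.PlaysMin σ v) :
    En (fun i => toE (H.wseq π.1 i)) ≤ supE H σ v := by
  rw [supE]
  exact le_iSup (fun π : H.PlaysMin σ v => En fun i => toE (H.wseq π.1 i)) π

lemma supE_nonneg (H : Game V (WithTop ℤ)) (σ : H.MinStrat) (v : V) : 0 ≤ supE H σ v := by
  obtain ⟨π⟩ := playsNonempty H σ v
  exact le_trans (En_nonneg _) (le_supE H σ v π)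

lemma EnVal_eq (H : Game V (WithTop ℤ)) (v : V) : EnVal H v = ⨅ σ : H.MinStrat, supE H σ v := rfl

lemma EnVal_nonneg (H : Game V (WithTop ℤ)) (v : V) : 0 ≤ EnVal H v := by
  rw [EnVal_eq]
  exact le_iInf fun σ => supE_nonneg H σ v

/-! ### `En⁺ ≤ En` pathwise and on values -/

lemma enatToE_EnP_le (w : ℕ → WithTop ℤ) : enatToE (EnP w) ≤ En (fun i => toE (w i)) := by
  rw [EnP]
  split
  · rename_i h
    have hnn : ∀ i < Nat.find h, 0 ≤ w i := fun i hi => not_lt.mp (Nat.find_min h hi)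
    rw [enatToE_sum]
    rw [Finset.sum_congr rfl (fun i hi => wToN_spec (hnn i (mem_range.mp hi)))]
    exact partial_le_En _ _
  · rename_i h
    push_neg at h
    refine enatToE_iSup_le _ fun k => ?_
    rw [enatToE_sum, Finset.sum_congr rfl (fun i _ => wToN_spec (h i))]
    exact partial_le_En _ _

lemma EnPVal_le_supE (H : Game V (WithTop ℤ)) (σ : H.MinStrat) (v : V) :
    enatToE (EnPVal H v) ≤ supE H σ v := by
  have h1 : EnPVal H v ≤ ⨆ π : H.PlaysMin σ v, EnP (H.wseq π.1) := iInf_le _ σ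
  refine le_trans (enatToE_mono h1) (enatToE_iSup_le _ fun π => ?_)
  exact le_trans (enatToE_EnP_le _) (le_supE H σ v π)

lemma EnPVal_le_EnVal (H : Game V (WithTop ℤ)) (v : V) :
    enatToE (EnPVal H v) ≤ EnVal H v := by
  rw [EnVal_eq]
  exact le_iInf fun σ => EnPVal_le_supE H σ v

/-! ### Concatenation -/

lemma key_concat (H : Game V (WithTop ℤ)) (σ : H.MinStrat) (v : V) (π : H.PlaysMin σ v) (k : ℕ) :
    (∑ i ∈ range k, toE (H.wseq π.1 i)) + supE H σ (π.1 k) ≤ supE H σ v := by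
  rw [supE]
  refine add_iSup_le (fun π' => En_ne_bot _) fun π' => ?_
  rw [En]
  refine add_iSup_le (fun m => sum_ne_bot fun i _ => toE_ne_bot _) fun m => ?_
  set ρ : ℕ → V := fun n => if n < k then π.1 n else π'.1 (n - k) with hρ
  have hρle : ∀ n ≤ k, ρ n = π.1 n := by
    intro n hn
    rcases lt_or_eq_of_le hn with h | h
    · simp [hρ, h]
    · subst h
      simp only [hρ, lt_irrefl, if_neg (lt_irrefl n), Nat.sub_self]
      exact π'.2.1
  have hρge : ∀ n, ρ (k + n) = π'.1 n := by
    intro n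
    simp [hρ, Nat.add_sub_cancel_left]
  have hstart : ρ 0 = v := by rw [hρle 0 (Nat.zero_le k)]; exact π.2.1
  have hpath : H.IsPath ρ := by
    intro n
    rcases le_or_gt (n + 1) k with h | h
    · rw [hρle n (by omega), hρle (n+1) h]
      exact π.2.2.1 n
    · have hn : k ≤ n := by omega
      have e1 : ρ n = π'.1 (n - k) := by
        have := hρge (n - k); rwa [Nat.add_sub_cancel' hn] at this
      have e2 : ρ (n + 1) = π'.1 (n - k + 1) := by
        have := hρge (n - k + 1)
        rwa [show k + (n - k + 1) = n + 1 by omega] at this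
      rw [e1, e2]
      exact π'.2.2.1 (n - k)
  have hcons : H.ConsMin σ ρ := by
    intro n hmin
    rcases le_or_gt (n + 1) k with h | h
    · rw [hρle n (by omega), hρle (n+1) h]
      rw [hρle n (by omega)] at hmin
      exact π.2.2.2 n hmin
    · have hn : k ≤ n := by omega
      have e1 : ρ n = π'.1 (n - k) := by
        have := hρge (n - k); rwa [Nat.add_sub_cancel' hn] at this
      have e2 : ρ (n + 1) = π'.1 (n - k + 1) := by
        have := hρge (n - k + 1)
        rwa [show k + (n - k + 1) = n + 1 by omega] at this
      rw [e1, e2]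
      rw [e1] at hmin
      exact π'.2.2.2 (n - k) hmin
  have hsum : (∑ i ∈ range k, toE (H.wseq π.1 i)) + ∑ i ∈ range m, toE (H.wseq π'.1 i)
      = ∑ i ∈ range (k + m), toE (H.wseq ρ i) := by
    rw [Finset.sum_range_add]
    congr 1
    · refine Finset.sum_congr rfl fun i hi => ?_
      have hik := mem_range.mp hi
      rw [wseq, wseq, hρle i (by omega), hρle (i+1) (by omega)]
    · refine Finset.sum_congr rfl fun i _ => ?_
      rw [wseq, wseq, hρge i, show k + i + 1 = k + (i + 1) by omega, hρge (i+1)]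
  rw [hsum]
  exact le_trans (partial_le_En _ _) (le_supE H σ v ⟨ρ, hstart, hpath, hcons⟩)

lemma key_bound (H : Game V (WithTop ℤ)) (σ : H.MinStrat) (v : V) (π : H.PlaysMin σ v) (k : ℕ) :
    (∑ i ∈ range k, toE (H.wseq π.1 i)) + enatToE (EnPVal H (π.1 k)) ≤ supE H σ v :=
  le_trans (add_le_add_right (EnPVal_le_supE H σ (π.1 k)) _) (key_concat H σ v π k)

end EslAux

namespace EslAux

open Finset Game

variable {V : Type}

lemma intToE_mono {a b : ℤ} (h : a ≤ b) : intToE a ≤ intToE b :=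
  EReal.coe_le_coe_iff.mpr (by exact_mod_cast h)

lemma enatToE_of_ne_top {x : ENat} (h : x ≠ ⊤) : enatToE x = intToE ((x.toNat : ℤ)) := by
  lift x to ℕ using h with n
  rw [enatToE_coe, intToE_apply]
  norm_cast

lemma En_le {w : ℕ → EReal} {T : EReal} (h : ∀ k, ∑ i ∈ range k, w i ≤ T) : En w ≤ T := by
  rw [En]; exact iSup_le h

lemma modify_wt (H : Game V (WithTop ℤ)) (φ : V → ENat) (u v : V) :
    (modify H φ).wt u v = modWt H.wt φ u v := rfl

lemma modWt_eq_top {w : V → V → WithTop ℤ} {φ : V → ENat} {u v : V}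
    (h : w u v = ⊤ ∨ φ u = ⊤ ∨ φ v = ⊤) : modWt w φ u v = ⊤ := if_pos h

lemma modWt_eq_coe {w : V → V → WithTop ℤ} {φ : V → ENat} {u v : V}
    (h1 : w u v ≠ ⊤) (h2 : φ u ≠ ⊤) (h3 : φ v ≠ ⊤) :
    modWt w φ u v = (((w u v).untopD 0 + ((φ v).toNat : ℤ) - ((φ u).toNat : ℤ) : ℤ) : WithTop ℤ) :=
  if_neg (by tauto)

lemma sum_toE_eq (H : Game V (WithTop ℤ)) (π : ℕ → V) (k : ℕ)
    (hw : ∀ i < k, H.wt (π i) (π (i + 1)) ≠ ⊤) :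
    ∑ i ∈ range k, toE (H.wseq π i)
      = intToE (∑ i ∈ range k, (H.wt (π i) (π (i + 1))).untopD 0) := by
  rw [map_sum]
  refine Finset.sum_congr rfl fun i hi => ?_
  have h := hw i (mem_range.mp hi)
  rw [wseq]
  lift H.wt (π i) (π (i + 1)) to ℤ using h with z hz
  rw [toE_coe, WithTop.untopD_coe, intToE_apply]

lemma sum_modWt_eq (H : Game V (WithTop ℤ)) (φ : V → ENat) (π : ℕ → V) (k : ℕ)
    (hw : ∀ i < k, H.wt (π i) (π (i + 1)) ≠ ⊤) (hφ : ∀ i ≤ k, φ (π i) ≠ ⊤) :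
    ∑ i ∈ range k, toE ((modify H φ).wseq π i)
      = intToE ((∑ i ∈ range k, (H.wt (π i) (π (i + 1))).untopD 0)
          + ((φ (π k)).toNat : ℤ) - ((φ (π 0)).toNat : ℤ)) := by
  have hterm : ∀ i < k, toE ((modify H φ).wseq π i)
      = intToE ((H.wt (π i) (π (i + 1))).untopD 0
          + ((φ (π (i+1))).toNat : ℤ) - ((φ (π i)).toNat : ℤ)) := by
    intro i hik
    rw [wseq, modify_wt, modWt_eq_coe (hw i hik) (hφ i (by omega)) (hφ (i+1) (by omega)), toE_coe,
      intToE_apply]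
  rw [Finset.sum_congr rfl (fun i hi => hterm i (mem_range.mp hi)), ← map_sum]
  congr 1
  have hsplit : ∀ i ∈ range k, (H.wt (π i) (π (i + 1))).untopD 0
      + ((φ (π (i+1))).toNat : ℤ) - ((φ (π i)).toNat : ℤ)
      = (H.wt (π i) (π (i + 1))).untopD 0
        + (((φ (π (i+1))).toNat : ℤ) - ((φ (π i)).toNat : ℤ)) := fun i _ => by ring
  rw [Finset.sum_congr rfl hsplit, Finset.sum_add_distrib,
    Finset.sum_range_sub (fun i => ((φ (π i)).toNat : ℤ))]
  try ring

lemma easy_path (H : Game V (WithTop ℤ)) (φ : V → ENat) (σ : H.MinStrat) (v : V)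
    (π : H.PlaysMin σ v) :
    En (fun i => toE (H.wseq π.1 i))
      ≤ enatToE (φ v) + En (fun i => toE ((modify H φ).wseq π.1 i)) := by
  refine En_le fun k => ?_
  by_cases hw : ∀ i < k, H.wt (π.1 i) (π.1 (i + 1)) ≠ ⊤
  · by_cases hφt : ∀ i ≤ k, φ (π.1 i) ≠ ⊤
    · -- finite case
      rw [sum_toE_eq H π.1 k hw]
      have e2 := sum_modWt_eq H φ π.1 k hw hφt
      have hle2 : intToE ((∑ i ∈ range k, (H.wt (π.1 i) (π.1 (i + 1))).untopD 0)
            + ((φ (π.1 k)).toNat : ℤ) - ((φ (π.1 0)).toNat : ℤ))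
          ≤ En (fun i => toE ((modify H φ).wseq π.1 i)) := e2 ▸ partial_le_En _ k
      have hv : φ (π.1 0) = φ v := by rw [π.2.1]
      have hfin0 : φ v ≠ ⊤ := hv ▸ hφt 0 (Nat.zero_le k)
      have hev : enatToE (φ v) = intToE (((φ v).toNat : ℤ)) := enatToE_of_ne_top hfin0
      calc intToE (∑ i ∈ range k, (H.wt (π.1 i) (π.1 (i + 1))).untopD 0)
          ≤ intToE (((φ v).toNat : ℤ))
            + intToE ((∑ i ∈ range k, (H.wt (π.1 i) (π.1 (i + 1))).untopD 0)
              + ((φ (π.1 k)).toNat : ℤ) - ((φ (π.1 0)).toNat : ℤ)) := by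
            rw [← map_add]
            refine intToE_mono ?_
            have h1 : (0 : ℤ) ≤ ((φ (π.1 k)).toNat : ℤ) := Int.natCast_nonneg _
            have h2 : ((φ (π.1 0)).toNat : ℤ) = ((φ v).toNat : ℤ) := by rw [hv]
            omega
        _ ≤ enatToE (φ v) + En (fun i => toE ((modify H φ).wseq π.1 i)) := by
            rw [hev]
            exact add_le_add_right hle2 _
    · -- some potential infinite
      push_neg at hφt
      obtain ⟨i, hik, htop⟩ := hφt
      have hmod : toE ((modify H φ).wseq π.1 i) = ⊤ := by
        rw [wseq, modify_wt, modWt_eq_top (Or.inr (Or.inl htop)), toE_top]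
      have hEn : En (fun i => toE ((modify H φ).wseq π.1 i)) = ⊤ := by
        refine top_le_iff.mp (le_trans ?_ (partial_le_En _ (k+1)))
        rw [sum_eq_top (fun i _ => toE_ne_bot _) (mem_range.mpr (by omega)) hmod]
      rw [hEn, EReal.add_top_of_ne_bot (enatToE_ne_bot _)]
      exact le_top
  · -- some weight infinite
    push_neg at hw
    obtain ⟨i, hik, htop⟩ := hw
    have hmod : toE ((modify H φ).wseq π.1 i) = ⊤ := by
      rw [wseq, modify_wt, modWt_eq_top (Or.inl htop), toE_top]
    have hEn : En (fun i => toE ((modify H φ).wseq π.1 i)) = ⊤ := by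
      refine top_le_iff.mp (le_trans ?_ (partial_le_En _ k))
      rw [sum_eq_top (fun i _ => toE_ne_bot _) (mem_range.mpr hik) hmod]
    rw [hEn, EReal.add_top_of_ne_bot (enatToE_ne_bot _)]
    exact le_top

lemma hard_path (H : Game V (WithTop ℤ)) (σ : H.MinStrat) (v : V) (π : H.PlaysMin σ v) :
    enatToE (EnPVal H v) + En (fun i => toE ((modify H (EnPVal H)).wseq π.1 i))
      ≤ supE H σ v := by
  rw [En]
  refine add_iSup_le (fun k => sum_ne_bot fun i _ => toE_ne_bot _) fun k => ?_
  by_cases hw : ∀ i < k, H.wt (π.1 i) (π.1 (i + 1)) ≠ ⊤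
  · by_cases hφt : ∀ i ≤ k, EnPVal H (π.1 i) ≠ ⊤
    · -- finite case
      rw [sum_modWt_eq H (EnPVal H) π.1 k hw hφt]
      have hv : EnPVal H (π.1 0) = EnPVal H v := by rw [π.2.1]
      have hfin0 : EnPVal H v ≠ ⊤ := hv ▸ hφt 0 (Nat.zero_le k)
      have hfink : EnPVal H (π.1 k) ≠ ⊤ := hφt k le_rfl
      rw [enatToE_of_ne_top hfin0, ← map_add]
      have harg : ((EnPVal H v).toNat : ℤ)
            + ((∑ i ∈ range k, (H.wt (π.1 i) (π.1 (i + 1))).untopD 0)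
              + ((EnPVal H (π.1 k)).toNat : ℤ) - ((EnPVal H (π.1 0)).toNat : ℤ))
          = (∑ i ∈ range k, (H.wt (π.1 i) (π.1 (i + 1))).untopD 0)
            + ((EnPVal H (π.1 k)).toNat : ℤ) := by
        have h2 : ((EnPVal H (π.1 0)).toNat : ℤ) = ((EnPVal H v).toNat : ℤ) := by rw [hv]
        omega
      rw [harg, map_add, ← sum_toE_eq H π.1 k hw, ← enatToE_of_ne_top hfink]
      exact key_bound H σ v π k
    · -- some potential infinite
      push_neg at hφt
      obtain ⟨i, hik, htop⟩ := hφt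
      have hb := key_bound H σ v π i
      have hsne : (∑ i' ∈ range i, toE (H.wseq π.1 i')) ≠ ⊥ :=
        sum_ne_bot fun i' _ => toE_ne_bot _
      rw [htop, enatToE_top, EReal.add_top_of_ne_bot hsne] at hb
      rw [top_le_iff.mp hb]
      exact le_top
  · -- some weight infinite
    push_neg at hw
    obtain ⟨i, hik, htop⟩ := hw
    have hb := key_bound H σ v π (i + 1)
    have hsum : (∑ i' ∈ range (i + 1), toE (H.wseq π.1 i')) = ⊤ := by
      refine sum_eq_top (fun i' _ => toE_ne_bot _) (i₀ := i) (mem_range.mpr (by omega)) ?_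
      rw [wseq, htop, toE_top]
    rw [hsum, EReal.top_add_of_ne_bot (enatToE_ne_bot _)] at hb
    rw [top_le_iff.mp hb]
    exact le_top

lemma EnVal_modify (H : Game V (WithTop ℤ)) (v : V) :
    EnVal H v = enatToE (EnPVal H v) + EnVal (modify H (EnPVal H)) v := by
  have hEnVal' : EnVal (modify H (EnPVal H)) v
      = ⨅ σ : H.MinStrat, ⨆ π : H.PlaysMin σ v,
          En (fun i => toE ((modify H (EnPVal H)).wseq π.1 i)) := rfl
  apply le_antisymm
  · rw [hEnVal']
    refine le_add_iInf (fun σ => ?_) (fun σ => ?_)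
    · exact le_iSup_of_le (Classical.arbitrary _) (En_nonneg _)
    · refine le_trans (iInf_le (fun σ : H.MinStrat => supE H σ v) σ) ?_
      rw [supE]
      refine iSup_le fun π => ?_
      refine le_trans (easy_path H (EnPVal H) σ v π) (add_le_add_right ?_ _)
      exact le_iSup (fun π : H.PlaysMin σ v =>
        En fun i => toE ((modify H (EnPVal H)).wseq π.1 i)) π
  · rw [EnVal_eq]
    refine le_iInf fun σ => ?_
    have h1 : EnVal (modify H (EnPVal H)) v
        ≤ ⨆ π : H.PlaysMin σ v, En (fun i => toE ((modify H (EnPVal H)).wseq π.1 i)) := by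
      rw [hEnVal']
      exact iInf_le _ σ
    refine le_trans (add_le_add_right h1 _) ?_
    exact add_iSup_le (fun π => En_ne_bot _) (fun π => hard_path H σ v π)

end EslAux

open EslAux

/-- Invariant of the ESL iteration: `Φ_j` is sound for `G` and `En_G = Φ_j + En_{G_j}`. -/
theorem esl_invariant {V : Type} [Fintype V] (G : Game V ℤ) (j : ℕ) :
    (∀ v : V, enatToE (eslPhi (liftZ G) j v) ≤ EnVal (liftZ G) v) ∧
    (∀ v : V, EnVal (liftZ G) v
        = enatToE (eslPhi (liftZ G) j v) + EnVal (esl (liftZ G) j) v) := by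
  have main : ∀ j : ℕ, ∀ v : V, EnVal (liftZ G) v
      = enatToE (eslPhi (liftZ G) j v) + EnVal (esl (liftZ G) j) v := by
    intro j
    induction j with
    | zero =>
      intro v
      rw [show eslPhi (liftZ G) 0 v = 0 from by simp [eslPhi]]
      rw [enatToE_zero, show esl (liftZ G) 0 = liftZ G from rfl, zero_add]
    | succ j ih =>
      intro v
      have hstep : esl (liftZ G) (j + 1)
          = modify (esl (liftZ G) j) (EnPVal (esl (liftZ G) j)) := rfl
      have hphi : eslPhi (liftZ G) (j + 1) v
          = eslPhi (liftZ G) j v + EnPVal (esl (liftZ G) j) v :=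
        Finset.sum_range_succ _ j
      rw [hphi, enatToE_add, hstep, ih v, EnVal_modify (esl (liftZ G) j) v, add_assoc]
  refine ⟨fun v => ?_, main j⟩
  rw [main j v]
  have h := add_le_add_right (EnVal_nonneg (esl (liftZ G) j) v)
    (enatToE (eslPhi (liftZ G) j v))
  simpa using h
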